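/- Let A be a countably infinite type and w : A → ℝ a weight function with w(a) > 0 for all a, such that for every t ∈ ℝ the set {a : A | w(a) ≤ t} is finite. Let ν : ℕ → ℝ be the strictly increasing enumeration of the set Ω = {w(a) | a ∈ A} of distinct weights, and let N(νᵢ) be the (finite) number of a ∈ A with w(a) = νᵢ. Suppose the set {s ∈ ℝ | the family (exp(−w(a)·s))_{a∈A} is summable} is nonempty and bounded below, and let Q be its infimum (the abscissa of convergence of the generating function G_A(s) = Σ_{a∈A} exp(−w(a)·s)). Then the combinatorial capacity C := limsup_{k→∞} ln(Σ_{i=1}^{k} N(νᵢ)) / ν_k equals Q. -/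

import Mathlib

open Filter

section Aux
open Real

/-- `(1 - e^{-sx})/s ≤ (1 - e^{-dx})/d` for `0 < d ≤ s`, `0 ≤ x`, via Bernoulli. -/
lemma aux_exp_ratio {d s x : ℝ} (hd : 0 < d) (hds : d ≤ s) (hx : 0 ≤ x) :
    1 - Real.exp (-(s * x)) ≤ (s / d) * (1 - Real.exp (-(d * x))) := by
  set y : ℝ := 1 - Real.exp (-(d * x)) with hy
  have hy0 : 0 ≤ y := by
    have : Real.exp (-(d * x)) ≤ 1 := by
      rw [Real.exp_le_one_iff]
      nlinarith [mul_nonneg hd.le hx]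
    linarith
  have hK : 1 ≤ s / d := (one_le_div hd).2 hds
  have hb := one_add_mul_self_le_rpow_one_add (s := -y) (by
      have : Real.exp (-(d*x)) > 0 := Real.exp_pos _
      simp only [hy]; linarith) hK
  have h1 : (1 + -y : ℝ) = Real.exp (-(d * x)) := by simp [hy]
  rw [h1] at hb
  have h2 : Real.exp (-(d * x)) ^ (s / d) = Real.exp (-(s * x)) := by
    rw [← Real.exp_mul]
    congr 1
    field_simp
  rw [h2] at hb
  nlinarith [hb]

/-- key step inequality: for `a ≤ b`, `0 < c < s`,
`e^{ca}(e^{-sa} - e^{-sb}) ≤ (s/(s-c))(e^{-(s-c)a} - e^{-(s-c)b})`. -/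
lemma aux_step {c s a b : ℝ} (hc : 0 < c) (hcs : c < s) (hab : a ≤ b) :
    Real.exp (c * a) * (Real.exp (-(s * a)) - Real.exp (-(s * b)))
      ≤ (s / (s - c)) * (Real.exp (-((s - c) * a)) - Real.exp (-((s - c) * b))) := by
  have hd : 0 < s - c := by linarith
  have h := aux_exp_ratio (d := s - c) (s := s) (x := b - a) hd (by linarith) (by linarith)
  have e1 : Real.exp (-(s * b)) = Real.exp (-(s * a)) * Real.exp (-(s * (b - a))) := by
    rw [← Real.exp_add]; ring_nf
  have e2 : Real.exp (-((s - c) * b))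
      = Real.exp (-((s - c) * a)) * Real.exp (-((s - c) * (b - a))) := by
    rw [← Real.exp_add]; ring_nf
  have e3 : Real.exp (c * a) * Real.exp (-(s * a)) = Real.exp (-((s - c) * a)) := by
    rw [← Real.exp_add]; ring_nf
  rw [e1, e2]
  calc Real.exp (c * a) * (Real.exp (-(s * a)) - Real.exp (-(s * a)) * Real.exp (-(s * (b - a))))
      = Real.exp (c * a) * Real.exp (-(s * a)) * (1 - Real.exp (-(s * (b - a)))) := by ring
    _ = Real.exp (-((s - c) * a)) * (1 - Real.exp (-(s * (b - a)))) := by rw [e3]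
    _ ≤ Real.exp (-((s - c) * a)) * ((s / (s - c)) * (1 - Real.exp (-((s - c) * (b - a))))) := by
        exact mul_le_mul_of_nonneg_left h (Real.exp_pos _).le
    _ = (s / (s - c)) * (Real.exp (-((s - c) * a))
          - Real.exp (-((s - c) * a)) * Real.exp (-((s - c) * (b - a)))) := by ring

/-- Abel-summation bound: if `S` is nonneg, `S k ≤ e^{c ν k}` for `k ≥ m`, `ν` monotone,
then the partial sums `∑_{i=m+1}^{k} (S i - S (i-1)) e^{-s ν i}` are uniformly bounded. -/
lemma aux_abel {ν S : ℕ → ℝ} {c s : ℝ} (hc : 0 < c) (hcs : c < s) (hν : Monotone ν)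
    (m : ℕ) (hSnn : ∀ k, 0 ≤ S k) (hS : ∀ k, m ≤ k → S k ≤ Real.exp (c * ν k)) :
    ∀ k, m ≤ k →
      (∑ i ∈ Finset.Ioc m k, (S i - S (i - 1)) * Real.exp (-(s * ν i)))
        ≤ S k * Real.exp (-(s * ν k))
          + (s / (s - c)) * (Real.exp (-((s - c) * ν m)) - Real.exp (-((s - c) * ν k))) := by
  intro k hk
  induction k, hk using Nat.le_induction with
  | base =>
      simp only [Finset.Ioc_self, Finset.sum_empty, sub_self, mul_zero, add_zero]
      exact mul_nonneg (hSnn m) (Real.exp_pos _).le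
  | succ n hn ih =>
      rw [Finset.sum_Ioc_succ_top (by omega)]
      have hstep : S n * (Real.exp (-(s * ν n)) - Real.exp (-(s * ν (n + 1))))
          ≤ (s / (s - c)) * (Real.exp (-((s - c) * ν n)) - Real.exp (-((s - c) * ν (n + 1)))) := by
        calc S n * (Real.exp (-(s * ν n)) - Real.exp (-(s * ν (n + 1))))
            ≤ Real.exp (c * ν n) * (Real.exp (-(s * ν n)) - Real.exp (-(s * ν (n + 1)))) := by
              apply mul_le_mul_of_nonneg_right (hS n hn)
              have := hν (Nat.le_succ n)
              have : s * ν n ≤ s * ν (n+1) :=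
                mul_le_mul_of_nonneg_left this (by linarith)
              have := Real.exp_le_exp.2 (neg_le_neg this)
              linarith
          _ ≤ _ := aux_step hc hcs (hν (Nat.le_succ n))
      have hsimp : (n + 1 - 1 : ℕ) = n := rfl
      rw [hsimp]
      -- goal: Ioc-sum + (S (n+1) - S n) * e^{-s ν(n+1)} ≤ S (n+1) e^{-sν(n+1)} + K e^{-dν m}
      linarith [ih, hstep]

section Bridge
variable {A : Type*} (w : A → ℝ) (ν : ℕ → ℝ)

lemma aux_bridge (hfin : ∀ t : ℝ, {a : A | w a ≤ t}.Finite)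
    (hν : StrictMono ν) (hrange : Set.range ν = Set.range w)
    (N : ℕ → ℕ) (hN : ∀ i, N i = Nat.card {a : A // w a = ν i}) (s : ℝ) :
    (Summable (fun a : A => Real.exp (-w a * s)) ↔
      Summable (fun i : ℕ => (N i : ℝ) * Real.exp (-ν i * s))) ∧
    (Summable (fun a : A => Real.exp (-w a * s)) →
      (∑' a : A, Real.exp (-w a * s)) = ∑' i : ℕ, (N i : ℝ) * Real.exp (-ν i * s)) := by
  have hidx : ∀ a : A, ∃ i, ν i = w a := by
    intro a
    have : w a ∈ Set.range ν := by rw [hrange]; exact ⟨a, rfl⟩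
    exact this
  choose idx hidx using hidx
  have key : ∀ (a : A) (i : ℕ), idx a = i ↔ w a = ν i := by
    intro a i
    constructor
    · rintro rfl; exact (hidx a).symm
    · intro h; exact hν.injective (by rw [hidx a, h])
  have hfibfin : ∀ i : ℕ, ({a : A | idx a = i}).Finite := by
    intro i
    apply (hfin (ν i)).subset
    intro a ha
    simp only [Set.mem_setOf_eq] at ha ⊢
    rw [(key a i).1 ha]
  have hfib : ∀ i : ℕ, Finite {a : A // idx a = i} := fun i => (hfibfin i).to_subtype
  have hcard : ∀ i : ℕ, Nat.card {a : A // idx a = i} = N i := by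
    intro i
    rw [hN i]
    exact Nat.card_congr (Equiv.subtypeEquivRight (fun a => key a i))
  set e : (Σ i : ℕ, {a : A // idx a = i}) ≃ A := Equiv.sigmaFiberEquiv idx with he
  set g : (Σ i : ℕ, {a : A // idx a = i}) → ℝ := fun p => Real.exp (-ν p.1 * s) with hg
  have hcomp : (fun a : A => Real.exp (-w a * s)) ∘ e = g := by
    funext ⟨i, a⟩
    simp only [Function.comp_apply, he, hg, Equiv.sigmaFiberEquiv]
    have := (key a.1 i).1 a.2
    simp [this]
  have hfsum : ∀ i : ℕ, (∑' _ : {a : A // idx a = i}, Real.exp (-ν i * s))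
      = (N i : ℝ) * Real.exp (-ν i * s) := by
    intro i
    have := Fintype.ofFinite {a : A // idx a = i}
    rw [tsum_fintype, Finset.sum_const, ← hcard i, Nat.card_eq_fintype_card,
      Finset.card_univ, nsmul_eq_mul]
  have hiff : Summable (fun a : A => Real.exp (-w a * s)) ↔
      Summable (fun i : ℕ => (N i : ℝ) * Real.exp (-ν i * s)) := by
    rw [← e.summable_iff, hcomp,
      summable_sigma_of_nonneg (fun p => (Real.exp_pos _).le)]
    constructor
    · rintro ⟨-, h2⟩
      convert h2 using 2 with i
      exact (hfsum i).symm
    · intro h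
      refine ⟨fun i => ?_, ?_⟩
      · have := hfib i; exact .of_finite
      · convert h using 2 with i
        exact hfsum i
  refine ⟨hiff, fun hsum => ?_⟩
  have hgsum : Summable g := by rw [← hcomp]; exact e.summable_iff.2 hsum
  calc (∑' a : A, Real.exp (-w a * s)) = ∑' p, g p := by
        rw [← e.tsum_eq]; exact tsum_congr (fun p => congrFun hcomp p)
    _ = ∑' i : ℕ, ∑' a : {a : A // idx a = i}, Real.exp (-ν i * s) := Summable.tsum_sigma hgsum
    _ = ∑' i : ℕ, (N i : ℝ) * Real.exp (-ν i * s) := tsum_congr hfsum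

end Bridge

end Aux

/-- **Theorem 1(1) of Böcherer et al.**: the combinatorial capacity
`C = limsup_k ln(∑_{i≤k} N(νᵢ))/ν_k` of a constrained system equals the abscissa of
convergence `Q` of its generating function `G_A(s) = ∑_{a∈A} exp(-w(a)·s)`. -/
theorem combinatorial_capacity_eq_abscissa
    {A : Type*} [Countable A] [Infinite A]
    (w : A → ℝ) (hw : ∀ a, 0 < w a)
    (hfin : ∀ t : ℝ, {a : A | w a ≤ t}.Finite)
    (ν : ℕ → ℝ) (hν : StrictMono ν)
    (hrange : Set.range ν = Set.range w)
    (N : ℕ → ℕ) (hN : ∀ i, N i = Nat.card {a : A // w a = ν i})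
    (hne : {s : ℝ | Summable fun a : A => Real.exp (-w a * s)}.Nonempty)
    (hbdd : BddBelow {s : ℝ | Summable fun a : A => Real.exp (-w a * s)})
    (Q : ℝ) (hQ : Q = sInf {s : ℝ | Summable fun a : A => Real.exp (-w a * s)}) :
    limsup (fun k : ℕ => Real.log (∑ i ∈ Finset.range (k + 1), (N i : ℝ)) / ν k) atTop
      = Q := by
  set Sset : Set ℝ := {s : ℝ | Summable fun a : A => Real.exp (-w a * s)} with hSset
  set SS : ℕ → ℝ := fun k => ∑ i ∈ Finset.range (k + 1), (N i : ℝ) with hSS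
  set f : ℕ → ℝ := fun k => Real.log (SS k) / ν k with hfdef
  -- basic facts about ν
  have hνmem : ∀ k, ∃ a : A, w a = ν k := by
    intro k
    have : ν k ∈ Set.range w := by rw [← hrange]; exact ⟨k, rfl⟩
    obtain ⟨a, ha⟩ := this
    exact ⟨a, ha⟩
  have hνpos : ∀ k, 0 < ν k := by
    intro k; obtain ⟨a, ha⟩ := hνmem k; rw [← ha]; exact hw a
  choose σ hσ using hνmem
  have hσinj : Function.Injective σ := by
    intro i j h
    exact hν.injective (by rw [← hσ i, ← hσ j, h])
  have hνtop : Tendsto ν atTop atTop := by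
    apply tendsto_atTop_atTop_of_monotone hν.monotone
    intro b
    have hpre : {i : ℕ | ν i ≤ b}.Finite := by
      have : {i : ℕ | ν i ≤ b} ⊆ σ ⁻¹' {a : A | w a ≤ b} := by
        intro i hi
        simp only [Set.mem_preimage, Set.mem_setOf_eq, hσ i]
        exact hi
      exact ((hfin b).preimage hσinj.injOn).subset this
    obtain ⟨i, hi⟩ := hpre.infinite_compl.nonempty
    exact ⟨i, le_of_not_ge hi⟩
  -- N i ≥ 1 and SS k ≥ 1
  have hN1 : ∀ i, 1 ≤ N i := by
    intro i
    rw [hN i]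
    have hfi : Finite {a : A // w a = ν i} := by
      apply Set.Finite.to_subtype
      apply (hfin (ν i)).subset
      intro a ha; exact le_of_eq ha
    have : Nonempty {a : A // w a = ν i} := ⟨⟨σ i, hσ i⟩⟩
    exact Nat.one_le_iff_ne_zero.2 Nat.card_pos.ne'
  have hSS1 : ∀ k, 1 ≤ SS k := by
    intro k
    have : ∑ i ∈ Finset.range (k + 1), (1 : ℝ) ≤ SS k := by
      apply Finset.sum_le_sum
      intro i _
      exact_mod_cast hN1 i
    simp only [Finset.sum_const, Finset.card_range, nsmul_eq_mul, mul_one] at this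
    calc (1:ℝ) ≤ (k+1 : ℕ) := by exact_mod_cast Nat.one_le_iff_ne_zero.2 (Nat.succ_ne_zero k)
      _ ≤ SS k := this
  have hSSpos : ∀ k, 0 < SS k := fun k => lt_of_lt_of_le one_pos (hSS1 k)
  have hfnn : ∀ k, 0 ≤ f k := fun k =>
    div_nonneg (Real.log_nonneg (hSS1 k)) (hνpos k).le
  -- every s in Sset is positive
  have hspos : ∀ s ∈ Sset, 0 < s := by
    intro s hs
    by_contra hle
    push_neg at hle
    have hsum : Summable fun a : A => Real.exp (-w a * s) := hs
    have := hsum.tendsto_cofinite_zero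
    have hev := this.eventually_lt_const (by norm_num : (0:ℝ) < 1)
    obtain ⟨a, ha⟩ := hev.exists
    have : (1:ℝ) ≤ Real.exp (-w a * s) := by
      rw [← Real.exp_zero]
      apply Real.exp_le_exp.2
      nlinarith [hw a]
    linarith
  -- key upper bound for f from any summable s
  have hkey : ∀ s ∈ Sset, ∀ k, f k ≤ s +
      Real.log (∑' i : ℕ, (N i : ℝ) * Real.exp (-ν i * s)) / ν k := by
    intro s hs k
    have hb := aux_bridge w ν hfin hν hrange N hN s
    have hφ : Summable (fun i : ℕ => (N i : ℝ) * Real.exp (-ν i * s)) := hb.1.1 hs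
    set G : ℝ := ∑' i : ℕ, (N i : ℝ) * Real.exp (-ν i * s) with hG
    have hpartial : ∑ i ∈ Finset.range (k + 1), (N i : ℝ) * Real.exp (-ν i * s) ≤ G :=
      Summable.sum_le_tsum _ (fun i _ => mul_nonneg (Nat.cast_nonneg _) (Real.exp_pos _).le) hφ
    have hs0 := hspos s hs
    have hlow : SS k * Real.exp (-ν k * s)
        ≤ ∑ i ∈ Finset.range (k + 1), (N i : ℝ) * Real.exp (-ν i * s) := by
      rw [hSS, Finset.sum_mul]
      apply Finset.sum_le_sum
      intro i hi
      apply mul_le_mul_of_nonneg_left _ (Nat.cast_nonneg _)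
      apply Real.exp_le_exp.2
      have : ν i ≤ ν k := hν.monotone (by
        simp only [Finset.mem_range] at hi; omega)
      nlinarith
    have hGpos : 0 < G :=
      lt_of_lt_of_le (mul_pos (hSSpos k) (Real.exp_pos _)) (le_trans hlow hpartial)
    have h1 : SS k ≤ G * Real.exp (ν k * s) := by
      have h2 : SS k * Real.exp (-ν k * s) ≤ G := le_trans hlow hpartial
      have h3 : Real.exp (-ν k * s) * Real.exp (ν k * s) = 1 := by
        rw [← Real.exp_add]; ring_nf; exact Real.exp_zero
      nlinarith [Real.exp_pos (ν k * s), Real.exp_pos (-ν k * s)]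
    have hlog : Real.log (SS k) ≤ Real.log G + ν k * s := by
      calc Real.log (SS k) ≤ Real.log (G * Real.exp (ν k * s)) :=
            Real.log_le_log (hSSpos k) h1
        _ = Real.log G + ν k * s := by
            rw [Real.log_mul hGpos.ne' (Real.exp_pos _).ne', Real.log_exp]
    rw [hfdef]
    have := hνpos k
    rw [div_le_iff₀ this]
    calc Real.log (SS k) ≤ Real.log G + ν k * s := hlog
      _ = (s + Real.log G / ν k) * ν k := by field_simp; ring
  -- f is bounded above
  obtain ⟨s₀, hs₀⟩ := hne
  have htend0 : ∀ c : ℝ, Tendsto (fun k => c / ν k) atTop (nhds 0) :=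
    fun c => Tendsto.div_atTop tendsto_const_nhds hνtop
  have hbound : IsBoundedUnder (· ≤ ·) atTop f := by
    apply isBoundedUnder_of_eventually_le (a := s₀ + 1)
    have hev : ∀ᶠ k in atTop,
        Real.log (∑' i : ℕ, (N i : ℝ) * Real.exp (-ν i * s₀)) / ν k < 1 :=
      (htend0 _).eventually_lt_const one_pos
    filter_upwards [hev] with k hk
    have := hkey s₀ hs₀ k
    linarith
  have hC0 : 0 ≤ limsup f atTop :=
    le_limsup_of_frequently_le (Frequently.of_forall hfnn) hbound
  -- direction 1 : limsup f ≤ Q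
  have hdir1 : limsup f atTop ≤ Q := by
    rw [hQ]
    apply le_csInf ⟨s₀, hs₀⟩
    intro s hs
    apply le_of_forall_pos_le_add
    intro ε hε
    apply limsup_le_of_le (isCoboundedUnder_le_of_le atTop hfnn)
    have hev : ∀ᶠ k in atTop,
        Real.log (∑' i : ℕ, (N i : ℝ) * Real.exp (-ν i * s)) / ν k < ε :=
      (htend0 _).eventually_lt_const hε
    filter_upwards [hev] with k hk
    have := hkey s hs k
    linarith
  -- direction 2 : Q ≤ limsup f
  have hdir2 : Q ≤ limsup f atTop := by
    apply le_of_forall_pos_le_add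
    intro ε hε
    set C := limsup f atTop with hC
    set c := C + ε / 2 with hc
    set s := C + ε with hsdef
    have hc0 : 0 < c := by rw [hc]; linarith
    have hcs : c < s := by rw [hc, hsdef]; linarith
    have hevf : ∀ᶠ k in atTop, f k < c :=
      eventually_lt_of_limsup_lt (by rw [hc]; linarith) hbound
    obtain ⟨m, hm⟩ := eventually_atTop.1 hevf
    have hSSb : ∀ k, m ≤ k → SS k ≤ Real.exp (c * ν k) := by
      intro k hk
      have h1 : Real.log (SS k) < c * ν k := by
        have := hm k hk
        rw [hfdef] at this
        have hp := hνpos k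
        rw [div_lt_iff₀ hp] at this
        linarith [this]
      calc SS k = Real.exp (Real.log (SS k)) := (Real.exp_log (hSSpos k)).symm
        _ ≤ Real.exp (c * ν k) := Real.exp_le_exp.2 h1.le
    -- summability of the grouped series at s
    have habel := aux_abel hc0 hcs hν.monotone m (fun k => (hSSpos k).le) hSSb
    have hNs : ∀ i : ℕ, 1 ≤ i → (N i : ℝ) = SS i - SS (i - 1) := by
      intro i hi
      have h1 : i - 1 + 1 = i := Nat.succ_pred_eq_of_pos hi
      have h2 : SS i = SS (i - 1) + N i := by
        rw [hSS]
        simp only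
        rw [show i + 1 = (i - 1 + 1) + 1 by omega, Finset.sum_range_succ, h1]
      linarith
    have hφsum : Summable (fun i : ℕ => (N i : ℝ) * Real.exp (-ν i * s)) := by
      set B : ℝ := (∑ i ∈ Finset.range (m + 1), (N i : ℝ) * Real.exp (-ν i * s))
        + 1 + s / (s - c) with hB
      apply summable_of_sum_range_le
        (fun n => mul_nonneg (Nat.cast_nonneg _) (Real.exp_pos _).le) (c := B)
      intro n
      have hmono : ∀ p q : ℕ, p ≤ q →
          ∑ i ∈ Finset.range p, (N i : ℝ) * Real.exp (-ν i * s)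
            ≤ ∑ i ∈ Finset.range q, (N i : ℝ) * Real.exp (-ν i * s) := by
        intro p q hpq
        apply Finset.sum_le_sum_of_subset_of_nonneg
        · exact Finset.range_subset_range.2 hpq
        · intro i _ _
          exact mul_nonneg (Nat.cast_nonneg _) (Real.exp_pos _).le
      set k := max m (n - 1) with hk
      have hn : n ≤ k + 1 := by omega
      have hmk : m ≤ k := le_max_left _ _
      calc ∑ i ∈ Finset.range n, (N i : ℝ) * Real.exp (-ν i * s)
          ≤ ∑ i ∈ Finset.range (k + 1), (N i : ℝ) * Real.exp (-ν i * s) := hmono _ _ hn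
        _ ≤ B := by
            have hsplit : ∑ i ∈ Finset.range (k + 1), (N i : ℝ) * Real.exp (-ν i * s)
                = (∑ i ∈ Finset.range (m + 1), (N i : ℝ) * Real.exp (-ν i * s))
                  + ∑ i ∈ Finset.Ioc m k, (N i : ℝ) * Real.exp (-ν i * s) := by
              rw [Finset.range_eq_Ico,
                ← Finset.sum_Ico_consecutive _ (Nat.zero_le (m+1)) (by omega : m + 1 ≤ k + 1)]
              congr 1
              · rw [Finset.range_eq_Ico]
              · rw [← Finset.Ico_add_one_add_one_eq_Ioc]
            rw [hsplit]
            have heq : ∑ i ∈ Finset.Ioc m k, (N i : ℝ) * Real.exp (-ν i * s)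
                = ∑ i ∈ Finset.Ioc m k, (SS i - SS (i - 1)) * Real.exp (-(s * ν i)) := by
              apply Finset.sum_congr rfl
              intro i hi
              simp only [Finset.mem_Ioc] at hi
              rw [hNs i (by omega)]
              congr 1
              ring_nf
            rw [heq]
            have h2 := habel k hmk
            have h3 : SS k * Real.exp (-(s * ν k)) ≤ 1 := by
              calc SS k * Real.exp (-(s * ν k))
                  ≤ Real.exp (c * ν k) * Real.exp (-(s * ν k)) :=
                    mul_le_mul_of_nonneg_right (hSSb k hmk) (Real.exp_pos _).le
                _ = Real.exp ((c - s) * ν k) := by rw [← Real.exp_add]; ring_nf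
                _ ≤ Real.exp 0 := Real.exp_le_exp.2 (by nlinarith [hνpos k])
                _ = 1 := Real.exp_zero
            have h4 : (s / (s - c)) * (Real.exp (-((s - c) * ν m))
                - Real.exp (-((s - c) * ν k))) ≤ s / (s - c) := by
              have hK : 0 ≤ s / (s - c) := by
                apply div_nonneg <;> nlinarith
              have : Real.exp (-((s - c) * ν m)) - Real.exp (-((s - c) * ν k)) ≤ 1 := by
                have := Real.exp_pos (-((s - c) * ν k))
                have h5 : Real.exp (-((s - c) * ν m)) ≤ 1 := by
                  rw [← Real.exp_zero]
                  apply Real.exp_le_exp.2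
                  nlinarith [hνpos m]
                linarith
              nlinarith
            rw [hB]
            linarith
    have hsin : s ∈ Sset := by
      rw [hSset]
      exact (aux_bridge w ν hfin hν hrange N hN s).1.2 hφsum
    have : Q ≤ s := by rw [hQ]; exact csInf_le hbdd hsin
    rw [hsdef] at this
    exact this
  exact le_antisymm hdir1 hdir2
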